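/- Let c be a general-model cost function (depending on tile and direction) on the infinite grid graph G with l layers, let T ⊆ V be nonempty and consistent with the grid, let i ∈ {1, …, p−1}, j ∈ {1, …, q−1}, z ∈ {1, …, l}, and let s = (x, y, z) be a vertex with ξ^i < x < ξ^{i+1} and υ^j < y < υ^{j+1}. Call a vertex (x', y', z') a boundary vertex of the tile if ξ^i ≤ x' ≤ ξ^{i+1}, υ^j ≤ y' ≤ υ^{j+1}, and x' ∈ {ξ^i, ξ^{i+1}} or y' ∈ {υ^j, υ^{j+1}}. If there exists a minimum-cost path from s to T in (G, c) that contains no boundary vertex of the tile, then dist_{(G,c)}(s, T) equals the minimum cost of an s-T-path consisting solely of via edges. -/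

import Mathlib

/-- Vertices of the infinite grid graph: `(x, y, z)` where `z` is the layer. -/
abbrev Vtx : Type := ℤ × ℤ × ℤ

/-- Two vertices of the infinite grid graph with layers `1, …, l` are adjacent iff both have
their layer coordinate in `{1, …, l}` and they differ by exactly `1` in exactly one
coordinate.  An edge changing the first coordinate is horizontal, one changing the second
coordinate is vertical, and one changing the third coordinate is a via. -/
def Adj (l : ℤ) (u v : Vtx) : Prop :=
  1 ≤ u.2.2 ∧ u.2.2 ≤ l ∧ 1 ≤ v.2.2 ∧ v.2.2 ≤ l ∧
    |u.1 - v.1| + |u.2.1 - v.2.1| + |u.2.2 - v.2.2| = 1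

/-- Simple-model edge cost: a horizontal (resp. vertical) edge on layer `z` costs `ch z`
(resp. `cv z`) and a via between layers `z` and `z+1` costs `cvia z`. -/
def ecost (ch cv cvia : ℤ → ℝ) (u v : Vtx) : ℝ :=
  if u.1 ≠ v.1 then ch u.2.2
  else if u.2.1 ≠ v.2.1 then cv u.2.2
  else cvia (min u.2.2 v.2.2)

/-- The cost of a walk (given as the list of its vertices) is the sum of its edge costs. -/
def wcost (c : Vtx → Vtx → ℝ) : List Vtx → ℝ
  | [] => 0
  | [_] => 0
  | u :: v :: P => c u v + wcost c (v :: P)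

/-- `P` is a walk from `u` to `v` with respect to the adjacency relation `A`. -/
def IsWalkA (A : Vtx → Vtx → Prop) (P : List Vtx) (u v : Vtx) : Prop :=
  P ≠ [] ∧ P.Chain' A ∧ P.head? = some u ∧ P.getLast? = some v

/-- The distance between two vertices: the infimum cost of a walk between them. -/
noncomputable def gdistA (A : Vtx → Vtx → Prop) (c : Vtx → Vtx → ℝ) (u v : Vtx) : ℝ :=
  sInf { m : ℝ | ∃ P, IsWalkA A P u v ∧ wcost c P = m }

/-- The distance from a vertex to a set of vertices. -/
noncomputable def gdistSetA (A : Vtx → Vtx → Prop) (c : Vtx → Vtx → ℝ) (u : Vtx)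
    (T : Set Vtx) : ℝ :=
  sInf { m : ℝ | ∃ P v, v ∈ T ∧ IsWalkA A P u v ∧ wcost c P = m }

/-- `inSeg n ξ i x` states that the coordinate `x` lies in the `i`-th interval
`[ξ^i, ξ^{i+1}]` of the rectilinear grid given by `ξ¹ ≤ … ≤ ξ^n`
(with the conventions `ξ⁰ = −∞` and `ξ^{n+1} = ∞`). -/
def inSeg (n : ℕ) (ξ : ℕ → ℤ) (i : ℕ) (x : ℤ) : Prop :=
  (i = 0 ∨ ξ i ≤ x) ∧ (i = n ∨ x ≤ ξ (i + 1))

/-- General-model edge cost: an edge lying in the tile with indices `(i, j, z)` costs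
`ch i j z`, `cv i j z` or `cvia i j z` according to its direction (for a via between layers
`z` and `z+1` the lower layer `z` is used), and an edge lying in more than one tile gets the
minimum of the applicable costs. -/
noncomputable def gecost (p q : ℕ) (ξ υ : ℕ → ℤ) (ch cv cvia : ℕ → ℕ → ℤ → ℝ)
    (u v : Vtx) : ℝ :=
  sInf { m : ℝ | ∃ i j : ℕ, i ≤ p ∧ j ≤ q ∧
    inSeg p ξ i u.1 ∧ inSeg p ξ i v.1 ∧ inSeg q υ j u.2.1 ∧ inSeg q υ j v.2.1 ∧
    m = if u.1 ≠ v.1 then ch i j u.2.2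
        else if u.2.1 ≠ v.2.1 then cv i j u.2.2
        else cvia i j (min u.2.2 v.2.2) }

/-- The rectangle with corner grid indices `i₁, i₂` (in x), `j₁, j₂` (in y), on layer `ζ`. -/
def GridRect (ξ υ : ℕ → ℤ) (i₁ i₂ j₁ j₂ : ℕ) (ζ : ℤ) : Set Vtx :=
  { w | ξ i₁ ≤ w.1 ∧ w.1 ≤ ξ i₂ ∧ υ j₁ ≤ w.2.1 ∧ w.2.1 ≤ υ j₂ ∧ w.2.2 = ζ }

/-- `T` is consistent with the grid: it is a finite union of rectangles whose corner
coordinates are grid coordinates `ξ^{i⁻} ≤ x ≤ ξ^{i⁺}`, `υ^{j⁻} ≤ y ≤ υ^{j⁺}` with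
`1 ≤ i⁻ ≤ i⁺ ≤ p`, `1 ≤ j⁻ ≤ j⁺ ≤ q`, each on a single layer `ζ ∈ {1, …, l}`. -/
def Consistent (p q : ℕ) (ξ υ : ℕ → ℤ) (l : ℤ) (T : Set Vtx) : Prop :=
  ∃ R : Finset ((ℕ × ℕ) × (ℕ × ℕ) × ℤ),
    (∀ r ∈ R, 1 ≤ r.1.1 ∧ r.1.1 ≤ r.1.2 ∧ r.1.2 ≤ p ∧
       1 ≤ r.2.1.1 ∧ r.2.1.1 ≤ r.2.1.2 ∧ r.2.1.2 ≤ q ∧ 1 ≤ r.2.2 ∧ r.2.2 ≤ l) ∧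
    T = ⋃ r ∈ R, GridRect ξ υ r.1.1 r.1.2 r.2.1.1 r.2.1.2 r.2.2

/-- A boundary vertex of the tile with indices `(i, j)`: its x- and y-coordinates lie in the
tile and at least one of them is on the tile boundary (any layer). -/
def BoundaryVtx (ξ υ : ℕ → ℤ) (i j : ℕ) (v : Vtx) : Prop :=
  ξ i ≤ v.1 ∧ v.1 ≤ ξ (i + 1) ∧ υ j ≤ v.2.1 ∧ v.2.1 ≤ υ (j + 1) ∧
    (v.1 = ξ i ∨ v.1 = ξ (i + 1) ∨ v.2.1 = υ j ∨ v.2.1 = υ (j + 1))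

lemma adj_cases {l : ℤ} {u w : Vtx} (h : Adj l u w) :
    ((w.1 = u.1 + 1 ∨ w.1 = u.1 - 1) ∧ w.2.1 = u.2.1 ∧ w.2.2 = u.2.2) ∨
    (w.1 = u.1 ∧ (w.2.1 = u.2.1 + 1 ∨ w.2.1 = u.2.1 - 1) ∧ w.2.2 = u.2.2) ∨
    (w.1 = u.1 ∧ w.2.1 = u.2.1 ∧ (w.2.2 = u.2.2 + 1 ∨ w.2.2 = u.2.2 - 1)) := by
  obtain ⟨_, _, _, _, h5⟩ := h
  rcases abs_cases (u.1 - w.1) with ⟨a1, b1⟩ | ⟨a1, b1⟩ <;>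
  rcases abs_cases (u.2.1 - w.2.1) with ⟨a2, b2⟩ | ⟨a2, b2⟩ <;>
  rcases abs_cases (u.2.2 - w.2.2) with ⟨a3, b3⟩ | ⟨a3, b3⟩ <;>
  rw [a1, a2, a3] at h5 <;> omega

lemma xiMono {p : ℕ} {ξ : ℕ → ℤ} (hξ : ∀ i, 1 ≤ i → i < p → ξ i ≤ ξ (i + 1)) :
    ∀ a b, 1 ≤ a → a ≤ b → b ≤ p → ξ a ≤ ξ b := by
  intro a b ha hab hbp
  induction b with
  | zero => omega
  | succ n ih =>
    rcases Nat.eq_or_lt_of_le hab with h | h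
    · exact h ▸ le_rfl
    · exact le_trans (ih (by omega) (by omega)) (hξ n (by omega) (by omega))

lemma segUnique {p : ℕ} {ξ : ℕ → ℤ} (hξ : ∀ i, 1 ≤ i → i < p → ξ i ≤ ξ (i + 1))
    {i : ℕ} (hi : 1 ≤ i) (hi' : i + 1 ≤ p) {x : ℤ} (hx1 : ξ i < x) (hx2 : x < ξ (i + 1))
    {i' : ℕ} (hi'p : i' ≤ p) (hseg : inSeg p ξ i' x) : i' = i := by
  obtain ⟨h1, h2⟩ := hseg
  have hge : i ≤ i' := by
    by_contra hlt
    rcases h2 with h2 | h2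
    · omega
    · have : ξ (i' + 1) ≤ ξ i := xiMono hξ (i' + 1) i (by omega) (by omega) (by omega)
      omega
  have hle : i' ≤ i := by
    by_contra hlt
    rcases h1 with h1 | h1
    · omega
    · have : ξ (i + 1) ≤ ξ i' := xiMono hξ (i + 1) i' (by omega) (by omega) hi'p
      omega
  omega

/-- Strictly inside the tile `(i,j)` in x and y. -/
def SIn (ξ υ : ℕ → ℤ) (i j : ℕ) (v : Vtx) : Prop :=
  ξ i < v.1 ∧ v.1 < ξ (i + 1) ∧ υ j < v.2.1 ∧ v.2.1 < υ (j + 1)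

noncomputable def Dn (f : ℤ → ℝ) : ℤ → ℕ → ℝ
  | _, 0 => 0
  | a, n + 1 => f a + Dn f (a + 1) n

lemma Dn_top (f : ℤ → ℝ) : ∀ (n : ℕ) (a : ℤ), Dn f a (n + 1) = Dn f a n + f (a + n) := by
  intro n
  induction n with
  | zero => intro a; simp [Dn]
  | succ m ih =>
    intro a
    show f a + Dn f (a + 1) (m + 1) = (f a + Dn f (a + 1) m) + f (a + (m + 1 : ℕ))
    rw [ih (a + 1)]
    push_cast
    ring_nf

lemma D_step_up (f : ℤ → ℝ) (a ζ : ℤ) (hf : 0 ≤ f a) :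
    Dn f (min a ζ) (ζ - a).natAbs ≤ f a + Dn f (min (a + 1) ζ) (ζ - (a + 1)).natAbs := by
  rcases lt_or_ge a ζ with h | h
  · have h1 : min a ζ = a := min_eq_left h.le
    have h2 : min (a + 1) ζ = a + 1 := min_eq_left (by omega)
    have h3 : (ζ - a).natAbs = (ζ - (a + 1)).natAbs + 1 := by omega
    rw [h1, h2, h3]
    exact le_of_eq rfl
  · have h1 : min a ζ = ζ := min_eq_right h
    have h2 : min (a + 1) ζ = ζ := min_eq_right (by omega)
    have h3 : (ζ - (a + 1)).natAbs = (ζ - a).natAbs + 1 := by omega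
    rw [h1, h2, h3, Dn_top]
    have h4 : ζ + ((ζ - a).natAbs : ℤ) = a := by omega
    rw [h4]
    linarith

lemma D_step_down (f : ℤ → ℝ) (a ζ : ℤ) (hf : 0 ≤ f (a - 1)) :
    Dn f (min a ζ) (ζ - a).natAbs ≤ f (a - 1) + Dn f (min (a - 1) ζ) (ζ - (a - 1)).natAbs := by
  rcases le_or_gt a ζ with h | h
  · have h1 : min a ζ = a := min_eq_left h
    have h2 : min (a - 1) ζ = a - 1 := min_eq_left (by omega)
    have h3 : (ζ - (a - 1)).natAbs = (ζ - a).natAbs + 1 := by omega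
    rw [h1, h2, h3]
    show Dn f a _ ≤ f (a-1) + (f (a-1) + Dn f (a - 1 + 1) _)
    rw [show a - 1 + 1 = a by ring]
    linarith
  · have h1 : min a ζ = ζ := min_eq_right h.le
    have h2 : min (a - 1) ζ = ζ := min_eq_right (by omega)
    have h3 : (ζ - a).natAbs = (ζ - (a - 1)).natAbs + 1 := by omega
    rw [h1, h2, h3, Dn_top]
    have h4 : ζ + ((ζ - (a - 1)).natAbs : ℤ) = a - 1 := by omega
    rw [h4]
    linarith

lemma gecost_via {p q : ℕ} {ξ υ : ℕ → ℤ} {ch cv cvia : ℕ → ℕ → ℤ → ℝ}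
    (hξ : ∀ i, 1 ≤ i → i < p → ξ i ≤ ξ (i + 1)) (hυ : ∀ j, 1 ≤ j → j < q → υ j ≤ υ (j + 1))
    {i j : ℕ} (hi : 1 ≤ i) (hi' : i + 1 ≤ p) (hj : 1 ≤ j) (hj' : j + 1 ≤ q)
    {u w : Vtx} (hu : SIn ξ υ i j u) (hw : SIn ξ υ i j w) (hx : u.1 = w.1)
    (hy : u.2.1 = w.2.1) :
    gecost p q ξ υ ch cv cvia u w = cvia i j (min u.2.2 w.2.2) := by
  obtain ⟨hu1, hu2, hu3, hu4⟩ := hu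
  obtain ⟨hw1, hw2, hw3, hw4⟩ := hw
  have hset : {m : ℝ | ∃ i' j' : ℕ, i' ≤ p ∧ j' ≤ q ∧
      inSeg p ξ i' u.1 ∧ inSeg p ξ i' w.1 ∧ inSeg q υ j' u.2.1 ∧ inSeg q υ j' w.2.1 ∧
      m = if u.1 ≠ w.1 then ch i' j' u.2.2
          else if u.2.1 ≠ w.2.1 then cv i' j' u.2.2
          else cvia i' j' (min u.2.2 w.2.2)} = {cvia i j (min u.2.2 w.2.2)} := by
    ext m
    simp only [Set.mem_setOf_eq, Set.mem_singleton_iff]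
    constructor
    · rintro ⟨i', j', hip, hjp, hsu, hsv, htu, htv, hm⟩
      obtain rfl := segUnique hξ hi hi' hu1 hu2 hip hsu
      obtain rfl := segUnique hυ hj hj' hu3 hu4 hjp htu
      rw [hm]
      simp [hx, hy]
    · rintro rfl
      exact ⟨i, j, by omega, by omega, ⟨Or.inr hu1.le, Or.inr hu2.le⟩,
        ⟨Or.inr hw1.le, Or.inr hw2.le⟩, ⟨Or.inr hu3.le, Or.inr hu4.le⟩,
        ⟨Or.inr hw3.le, Or.inr hw4.le⟩, by simp [hx, hy]⟩
  show sInf _ = _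
  rw [hset, csInf_singleton]

lemma gecost_nonneg {p q : ℕ} {ξ υ : ℕ → ℤ} {ch cv cvia : ℕ → ℕ → ℤ → ℝ} {l : ℤ}
    (hch : ∀ i j z, i ≤ p → j ≤ q → 1 ≤ z → z ≤ l → 0 < ch i j z)
    (hcv : ∀ i j z, i ≤ p → j ≤ q → 1 ≤ z → z ≤ l → 0 < cv i j z)
    (hcvia : ∀ i j z, i ≤ p → j ≤ q → 1 ≤ z → z < l → 0 < cvia i j z)
    {u w : Vtx} (hadj : Adj l u w) : 0 ≤ gecost p q ξ υ ch cv cvia u w := by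
  apply Real.sInf_nonneg
  rintro m ⟨i', j', hip, hjp, _, _, _, _, rfl⟩
  have hz1 := hadj.1
  have hz2 := hadj.2.1
  have hz3 := hadj.2.2.1
  have hz4 := hadj.2.2.2.1
  split_ifs with h1 h2
  · exact (hch i' j' u.2.2 hip hjp hz1 hz2).le
  · exact (hcv i' j' u.2.2 hip hjp hz1 hz2).le
  · push_neg at h1 h2
    rcases adj_cases hadj with ⟨hc, _, _⟩ | ⟨_, hc, _⟩ | ⟨_, _, hc⟩
    · omega
    · omega
    · exact (hcvia i' j' (min u.2.2 w.2.2) hip hjp (by omega) (by omega)).le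

lemma si_step {ξ υ : ℕ → ℤ} {i j : ℕ} {l : ℤ} {u w : Vtx} (hu : SIn ξ υ i j u)
    (hadj : Adj l u w) (hnb : ¬ BoundaryVtx ξ υ i j w) : SIn ξ υ i j w := by
  obtain ⟨hu1, hu2, hu3, hu4⟩ := hu
  have hb1 : ξ i ≤ w.1 ∧ w.1 ≤ ξ (i + 1) ∧ υ j ≤ w.2.1 ∧ w.2.1 ≤ υ (j + 1) := by
    rcases adj_cases hadj with ⟨hc, h1, h2⟩ | ⟨h1, hc, h2⟩ | ⟨h1, h2, hc⟩ <;>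
      refine ⟨by omega, by omega, by omega, by omega⟩
  have h4 : ¬(w.1 = ξ i ∨ w.1 = ξ (i + 1) ∨ w.2.1 = υ j ∨ w.2.1 = υ (j + 1)) :=
    fun hd => hnb ⟨hb1.1, hb1.2.1, hb1.2.2.1, hb1.2.2.2, hd⟩
  push_neg at h4
  obtain ⟨n1, n2, n3, n4⟩ := h4
  exact ⟨by omega, by omega, by omega, by omega⟩

lemma si_walk {ξ υ : ℕ → ℤ} {i j : ℕ} {l : ℤ} :
    ∀ (P : List Vtx), P.Chain' (Adj l) → (∀ w ∈ P, ¬ BoundaryVtx ξ υ i j w) →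
      ∀ u, P.head? = some u → SIn ξ υ i j u → ∀ w ∈ P, SIn ξ υ i j w := by
  intro P
  induction P with
  | nil => simp
  | cons a P ih =>
    intro hchain hnb u hh hu w hw
    obtain rfl : a = u := by simpa using hh
    rcases List.mem_cons.mp hw with rfl | hw
    · exact hu
    · rcases P with _ | ⟨b, P'⟩
      · simp at hw
      · have hcc := List.isChain_cons_cons.mp hchain
        have hb : SIn ξ υ i j b := si_step hu hcc.1 (hnb b (by simp))
        exact ih hcc.2 (fun x hx => hnb x (List.mem_cons_of_mem _ hx)) b rfl hb w hw

lemma wcost_cons {c : Vtx → Vtx → ℝ} {a b : Vtx} {L : List Vtx} (h : L.head? = some b) :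
    wcost c (a :: L) = c a b + wcost c L := by
  rcases L with _ | ⟨x, L'⟩
  · simp at h
  · obtain rfl : x = b := by simpa using h
    rfl

lemma cross {p q : ℕ} {ξ υ : ℕ → ℤ} {ch cv cvia : ℕ → ℕ → ℤ → ℝ} {l : ℤ} {i j : ℕ}
    (hξ : ∀ i, 1 ≤ i → i < p → ξ i ≤ ξ (i + 1)) (hυ : ∀ j, 1 ≤ j → j < q → υ j ≤ υ (j + 1))
    (hch : ∀ i j z, i ≤ p → j ≤ q → 1 ≤ z → z ≤ l → 0 < ch i j z)
    (hcv : ∀ i j z, i ≤ p → j ≤ q → 1 ≤ z → z ≤ l → 0 < cv i j z)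
    (hcvia : ∀ i j z, i ≤ p → j ≤ q → 1 ≤ z → z < l → 0 < cvia i j z)
    (hi : 1 ≤ i) (hi' : i + 1 ≤ p) (hj : 1 ≤ j) (hj' : j + 1 ≤ q) :
    ∀ (P : List Vtx) (u v : Vtx), P.Chain' (Adj l) → P.head? = some u →
      P.getLast? = some v → (∀ w ∈ P, SIn ξ υ i j w) →
      Dn (cvia i j) (min u.2.2 v.2.2) (v.2.2 - u.2.2).natAbs ≤
        wcost (gecost p q ξ υ ch cv cvia) P := by
  intro P
  induction P with
  | nil => simp
  | cons a P ih =>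
    intro u v hchain hh hlast hSI
    obtain rfl : a = u := by simpa using hh
    rcases P with _ | ⟨b, P'⟩
    · obtain rfl : a = v := by simpa using hlast
      simp [wcost, Dn]
    · have hcc := List.isChain_cons_cons.mp hchain
      have hlast' : (b :: P').getLast? = some v := by
        rw [← hlast, List.getLast?_cons_cons]
      have hSIa := hSI a (by simp)
      have hSIb := hSI b (by simp)
      have IH := ih b v hcc.2 rfl hlast' (fun w hw => hSI w (List.mem_cons_of_mem _ hw))
      rw [wcost_cons (L := b :: P') (b := b) rfl]
      rcases adj_cases hcc.1 with ⟨hc, h1, h2⟩ | ⟨h1, hc, h2⟩ | ⟨h1, h2, hc⟩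
      · have hge := gecost_nonneg (ξ := ξ) (υ := υ) hch hcv hcvia hcc.1
        rw [h2] at IH
        linarith
      · have hge := gecost_nonneg (ξ := ξ) (υ := υ) hch hcv hcvia hcc.1
        rw [h2] at IH
        linarith
      · have hcost : gecost p q ξ υ ch cv cvia a b = cvia i j (min a.2.2 b.2.2) :=
          gecost_via hξ hυ hi hi' hj hj' hSIa hSIb h1.symm h2.symm
        rw [hcost]
        have hz1 := hcc.1.1
        have hz2 := hcc.1.2.1
        have hz3 := hcc.1.2.2.1
        have hz4 := hcc.1.2.2.2.1
        rcases hc with hc | hc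
        · have hf : (0:ℝ) ≤ cvia i j a.2.2 :=
            (hcvia i j a.2.2 (by omega) (by omega) hz1 (by omega)).le
          have hstep := D_step_up (cvia i j) a.2.2 v.2.2 hf
          have hmin : min a.2.2 b.2.2 = a.2.2 := by omega
          rw [hmin]
          rw [hc] at IH
          linarith
        · have hf : (0:ℝ) ≤ cvia i j (a.2.2 - 1) :=
            (hcvia i j (a.2.2 - 1) (by omega) (by omega) (by omega) (by omega)).le
          have hstep := D_step_down (cvia i j) a.2.2 v.2.2 hf
          have hmin : min a.2.2 b.2.2 = a.2.2 - 1 := by omega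
          rw [hmin]
          rw [hc] at IH
          linarith

def vPath (x y d : ℤ) : ℤ → ℕ → List Vtx
  | z, 0 => [(x, y, z)]
  | z, n + 1 => (x, y, z) :: vPath x y d (z + d) n

lemma vPath_ne_nil (x y d z : ℤ) (n : ℕ) : vPath x y d z n ≠ [] := by
  cases n <;> simp [vPath]

lemma vPath_head (x y d z : ℤ) (n : ℕ) : (vPath x y d z n).head? = some (x, y, z) := by
  cases n <;> simp [vPath]

lemma getLast?_cons_ne_nil {a : Vtx} {L : List Vtx} (h : L ≠ []) :
    (a :: L).getLast? = L.getLast? := by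
  rcases L with _ | ⟨b, L'⟩
  · exact absurd rfl h
  · exact List.getLast?_cons_cons ..

lemma vPath_last (x y d : ℤ) : ∀ (n : ℕ) (z : ℤ),
    (vPath x y d z n).getLast? = some (x, y, z + n * d) := by
  intro n
  induction n with
  | zero => intro z; simp [vPath]
  | succ m ih =>
    intro z
    show ((x, y, z) :: vPath x y d (z + d) m).getLast? = _
    rw [getLast?_cons_ne_nil (vPath_ne_nil x y d (z + d) m), ih (z + d)]
    congr 2
    push_cast
    ring

lemma adj_vert {l x y z z' : ℤ} (h1 : 1 ≤ min z z') (h2 : max z z' ≤ l)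
    (h3 : z' = z + 1 ∨ z' = z - 1) : Adj l (x, y, z) (x, y, z') := by
  refine ⟨?_, ?_, ?_, ?_, ?_⟩
  · show (1:ℤ) ≤ z; omega
  · show z ≤ l; omega
  · show (1:ℤ) ≤ z'; omega
  · show z' ≤ l; omega
  show |x - x| + |y - y| + |z - z'| = 1
  rw [Int.abs_eq_natAbs, Int.abs_eq_natAbs, Int.abs_eq_natAbs]
  omega

lemma vPath_chain (l x y : ℤ) {d : ℤ} (hd : d = 1 ∨ d = -1) : ∀ (n : ℕ) (z : ℤ),
    1 ≤ min z (z + n * d) → max z (z + n * d) ≤ l → (vPath x y d z n).Chain' (Adj l) := by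
  intro n
  induction n with
  | zero => intro z _ _; simp [vPath, List.Chain']
  | succ m ih =>
    intro z hz1 hz2
    show List.Chain' (Adj l) ((x, y, z) :: vPath x y d (z + d) m)
    rw [List.Chain', List.isChain_cons]
    constructor
    · intro b hb
      rw [vPath_head] at hb
      obtain rfl : (x, y, z + d) = b := by simpa using hb
      refine adj_vert ?_ ?_ (by omega) <;> push_cast at hz1 hz2 ⊢ <;> rcases hd with rfl | rfl <;> omega
    · apply ih <;> push_cast at hz1 hz2 ⊢ <;> rcases hd with rfl | rfl <;> omega

lemma vPath_via_chain (x y d : ℤ) : ∀ (n : ℕ) (z : ℤ),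
    (vPath x y d z n).Chain' (fun a b => a.1 = b.1 ∧ a.2.1 = b.2.1) := by
  intro n
  induction n with
  | zero => intro z; simp [vPath, List.Chain']
  | succ m ih =>
    intro z
    show List.Chain' _ ((x, y, z) :: vPath x y d (z + d) m)
    rw [List.Chain', List.isChain_cons]
    refine ⟨?_, ih (z + d)⟩
    intro b hb
    rw [vPath_head] at hb
    obtain rfl : (x, y, z + d) = b := by simpa using hb
    exact ⟨rfl, rfl⟩

lemma vPath_wcost_up {p q : ℕ} {ξ υ : ℕ → ℤ} {ch cv cvia : ℕ → ℕ → ℤ → ℝ} {i j : ℕ}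
    (hξ : ∀ i, 1 ≤ i → i < p → ξ i ≤ ξ (i + 1)) (hυ : ∀ j, 1 ≤ j → j < q → υ j ≤ υ (j + 1))
    (hi : 1 ≤ i) (hi' : i + 1 ≤ p) (hj : 1 ≤ j) (hj' : j + 1 ≤ q) {x y : ℤ}
    (hx1 : ξ i < x) (hx2 : x < ξ (i + 1)) (hy1 : υ j < y) (hy2 : y < υ (j + 1)) :
    ∀ (n : ℕ) (z : ℤ),
      wcost (gecost p q ξ υ ch cv cvia) (vPath x y 1 z n) = Dn (cvia i j) z n := by
  intro n
  induction n with
  | zero => intro z; simp [vPath, wcost, Dn]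
  | succ m ih =>
    intro z
    show wcost _ ((x, y, z) :: vPath x y 1 (z + 1) m) = cvia i j z + Dn (cvia i j) (z + 1) m
    rw [wcost_cons (vPath_head x y 1 (z + 1) m), ih (z + 1)]
    congr 1
    rw [gecost_via (u := (x,y,z)) (w := (x,y,z+1)) hξ hυ hi hi' hj hj' ⟨hx1, hx2, hy1, hy2⟩ ⟨hx1, hx2, hy1, hy2⟩ rfl rfl]
    show cvia i j (min z (z + 1)) = cvia i j z
    congr 1
    omega

lemma vPath_wcost_down {p q : ℕ} {ξ υ : ℕ → ℤ} {ch cv cvia : ℕ → ℕ → ℤ → ℝ} {i j : ℕ}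
    (hξ : ∀ i, 1 ≤ i → i < p → ξ i ≤ ξ (i + 1)) (hυ : ∀ j, 1 ≤ j → j < q → υ j ≤ υ (j + 1))
    (hi : 1 ≤ i) (hi' : i + 1 ≤ p) (hj : 1 ≤ j) (hj' : j + 1 ≤ q) {x y : ℤ}
    (hx1 : ξ i < x) (hx2 : x < ξ (i + 1)) (hy1 : υ j < y) (hy2 : y < υ (j + 1)) :
    ∀ (n : ℕ) (z : ℤ),
      wcost (gecost p q ξ υ ch cv cvia) (vPath x y (-1) z n) = Dn (cvia i j) (z - n) n := by
  intro n
  induction n with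
  | zero => intro z; simp [vPath, wcost, Dn]
  | succ m ih =>
    intro z
    show wcost _ ((x, y, z) :: vPath x y (-1) (z + (-1)) m) = _
    rw [wcost_cons (vPath_head x y (-1) (z + (-1)) m), ih (z + (-1))]
    rw [gecost_via (u := (x,y,z)) (w := (x,y,z+(-1))) hξ hυ hi hi' hj hj' ⟨hx1, hx2, hy1, hy2⟩ ⟨hx1, hx2, hy1, hy2⟩ rfl rfl]
    have e1 : (min z (z + (-1)) : ℤ) = z - 1 := by omega
    show cvia i j (min z (z + (-1))) + Dn (cvia i j) (z + (-1) - m) m = _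
    rw [e1]
    have e2 : (z - ((m : ℤ) + 1)) = (z + (-1) - m) := by ring
    have e3 : ((m + 1 : ℕ) : ℤ) = (m : ℤ) + 1 := by push_cast; ring
    rw [e3, e2, Dn_top]
    have e4 : (z + (-1) - (m:ℤ)) + (m:ℤ) = z - 1 := by ring
    rw [e4]
    ring
/-- In the general cost model with `T` consistent with the grid, let `s` be
a vertex strictly inside the tile `(i, j)` with `1 ≤ i ≤ p − 1` and `1 ≤ j ≤ q − 1`.  If some
minimum-cost path from `s` to `T` contains no boundary vertex of the tile, then
`dist (s, T)` equals the minimum cost of an `s`-`T`-path consisting solely of via edges. -/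
theorem stmt13 (l : ℤ) (hl : 1 ≤ l) (p q : ℕ) (ξ υ : ℕ → ℤ)
    (hξ : ∀ i, 1 ≤ i → i < p → ξ i ≤ ξ (i + 1)) (hυ : ∀ j, 1 ≤ j → j < q → υ j ≤ υ (j + 1))
    (ch cv cvia : ℕ → ℕ → ℤ → ℝ)
    (hch : ∀ i j z, i ≤ p → j ≤ q → 1 ≤ z → z ≤ l → 0 < ch i j z)
    (hcv : ∀ i j z, i ≤ p → j ≤ q → 1 ≤ z → z ≤ l → 0 < cv i j z)
    (hcvia : ∀ i j z, i ≤ p → j ≤ q → 1 ≤ z → z < l → 0 < cvia i j z)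
    (T : Set Vtx) (hTne : T.Nonempty) (hTcon : Consistent p q ξ υ l T)
    (i j : ℕ) (hi : 1 ≤ i) (hi' : i + 1 ≤ p) (hj : 1 ≤ j) (hj' : j + 1 ≤ q)
    (s : Vtx) (hsl : 1 ≤ s.2.2 ∧ s.2.2 ≤ l)
    (hsx : ξ i < s.1 ∧ s.1 < ξ (i + 1)) (hsy : υ j < s.2.1 ∧ s.2.1 < υ (j + 1))
    (hpath : ∃ (P : List Vtx) (v : Vtx), v ∈ T ∧ IsWalkA (Adj l) P s v ∧
      (∀ (Q : List Vtx) (w : Vtx), w ∈ T → IsWalkA (Adj l) Q s w →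
        wcost (gecost p q ξ υ ch cv cvia) P ≤ wcost (gecost p q ξ υ ch cv cvia) Q) ∧
      ∀ u ∈ P, ¬ BoundaryVtx ξ υ i j u) :
    IsLeast
      { m : ℝ | ∃ (Q : List Vtx) (w : Vtx), w ∈ T ∧ IsWalkA (Adj l) Q s w ∧
          Q.Chain' (fun a b => a.1 = b.1 ∧ a.2.1 = b.2.1) ∧
          wcost (gecost p q ξ υ ch cv cvia) Q = m }
      (gdistSetA (Adj l) (gecost p q ξ υ ch cv cvia) s T) := by
  obtain ⟨P, v, hvT, hPw, hPmin, hPnb⟩ := hpath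
  obtain ⟨hPne, hPchain, hPhead, hPlast⟩ := hPw
  set c := gecost p q ξ υ ch cv cvia with hc
  have hsSI : SIn ξ υ i j s := ⟨hsx.1, hsx.2, hsy.1, hsy.2⟩
  have hallSI : ∀ w ∈ P, SIn ξ υ i j w := si_walk P hPchain hPnb s hPhead hsSI
  have hvP : v ∈ P := by
    obtain ⟨h, rfl⟩ := List.mem_getLast?_eq_getLast (Option.mem_def.mpr hPlast)
    exact List.getLast_mem h
  have hvSI := hallSI v hvP
  obtain ⟨hv1, hv2, hv3, hv4⟩ := hvSI
  obtain ⟨R, hR, hTeq⟩ := hTcon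
  have hvT' := hvT
  rw [hTeq] at hvT'
  simp only [Set.mem_iUnion] at hvT'
  obtain ⟨r, hrR, hvr⟩ := hvT'
  obtain ⟨hg1, hg2, hg3, hg4, hg5⟩ := hvr
  obtain ⟨hr1, hr2, hr3, hr4, hr5, hr6, hr7, hr8⟩ := hR r hrR
  have hia : r.1.1 ≤ i := by
    by_contra hlt
    have : ξ (i + 1) ≤ ξ r.1.1 := xiMono hξ (i + 1) r.1.1 (by omega) (by omega) (by omega)
    omega
  have hib : i + 1 ≤ r.1.2 := by
    by_contra hlt
    have : ξ r.1.2 ≤ ξ i := xiMono hξ r.1.2 i (by omega) (by omega) (by omega)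
    omega
  have hja : r.2.1.1 ≤ j := by
    by_contra hlt
    have : υ (j + 1) ≤ υ r.2.1.1 := xiMono hυ (j + 1) r.2.1.1 (by omega) (by omega) (by omega)
    omega
  have hjb : j + 1 ≤ r.2.1.2 := by
    by_contra hlt
    have : υ r.2.1.2 ≤ υ j := xiMono hυ r.2.1.2 j (by omega) (by omega) (by omega)
    omega
  have hxa : ξ r.1.1 ≤ s.1 := le_trans (xiMono hξ r.1.1 i hr1 hia (by omega)) hsx.1.le
  have hxb : s.1 ≤ ξ r.1.2 := le_trans hsx.2.le (xiMono hξ (i + 1) r.1.2 (by omega) hib hr3)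
  have hya : υ r.2.1.1 ≤ s.2.1 := le_trans (xiMono hυ r.2.1.1 j hr4 hja (by omega)) hsy.1.le
  have hyb : s.2.1 ≤ υ r.2.1.2 := le_trans hsy.2.le (xiMono hυ (j + 1) r.2.1.2 (by omega) hjb hr6)
  have htT : (s.1, s.2.1, v.2.2) ∈ T := by
    rw [hTeq]
    simp only [Set.mem_iUnion]
    exact ⟨r, hrR, hxa, hxb, hya, hyb, hg5⟩
  have hz1 : 1 ≤ v.2.2 := by omega
  have hz2 : v.2.2 ≤ l := by omega
  obtain ⟨hs1, hs2⟩ := hsl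
  have key : ∃ Q : List Vtx, IsWalkA (Adj l) Q s (s.1, s.2.1, v.2.2) ∧
      Q.Chain' (fun a b => a.1 = b.1 ∧ a.2.1 = b.2.1) ∧
      wcost c Q = Dn (cvia i j) (min s.2.2 v.2.2) (v.2.2 - s.2.2).natAbs := by
    rcases le_total s.2.2 v.2.2 with hcs | hcs
    · refine ⟨vPath s.1 s.2.1 1 s.2.2 (v.2.2 - s.2.2).toNat,
        ⟨vPath_ne_nil _ _ _ _ _, vPath_chain l s.1 s.2.1 (Or.inl rfl) _ _
          (by push_cast; omega) (by push_cast; omega), ?_, ?_⟩,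
        vPath_via_chain _ _ _ _ _, ?_⟩
      · rw [vPath_head]
      · rw [vPath_last]
        simp only [Option.some.injEq, Prod.mk.injEq, mul_one, mul_neg_one]
        refine ⟨trivial, trivial, by omega⟩
      · rw [hc, vPath_wcost_up hξ hυ hi hi' hj hj' hsx.1 hsx.2 hsy.1 hsy.2]
        congr 1
        · omega
        · omega
    · refine ⟨vPath s.1 s.2.1 (-1) s.2.2 (s.2.2 - v.2.2).toNat,
        ⟨vPath_ne_nil _ _ _ _ _, vPath_chain l s.1 s.2.1 (Or.inr rfl) _ _
          (by push_cast; omega) (by push_cast; omega), ?_, ?_⟩,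
        vPath_via_chain _ _ _ _ _, ?_⟩
      · rw [vPath_head]
      · rw [vPath_last]
        simp only [Option.some.injEq, Prod.mk.injEq, mul_one, mul_neg_one]
        refine ⟨trivial, trivial, by omega⟩
      · rw [hc, vPath_wcost_down hξ hυ hi hi' hj hj' hsx.1 hsx.2 hsy.1 hsy.2]
        congr 1
        · push_cast; omega
        · omega
  obtain ⟨Q, hQwalk, hQvia, hQcost⟩ := key
  have hPD : Dn (cvia i j) (min s.2.2 v.2.2) (v.2.2 - s.2.2).natAbs ≤ wcost c P :=
    cross hξ hυ hch hcv hcvia hi hi' hj hj' P s v hPchain hPhead hPlast hallSI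
  have hle : wcost c P ≤ wcost c Q := hPmin Q _ htT hQwalk
  have hQP : wcost c Q = wcost c P := le_antisymm (by rw [hQcost]; exact hPD) hle
  have hdist : gdistSetA (Adj l) c s T = wcost c P := by
    apply IsLeast.csInf_eq
    constructor
    · exact ⟨P, v, hvT, ⟨hPne, hPchain, hPhead, hPlast⟩, rfl⟩
    · rintro m ⟨Q', w', hw'T, hQ'walk, rfl⟩
      exact hPmin Q' w' hw'T hQ'walk
  rw [hdist]
  constructor
  · exact ⟨Q, (s.1, s.2.1, v.2.2), htT, hQwalk, hQvia, hQP⟩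
  · rintro m ⟨Q', w', hw'T, hQ'walk, _, rfl⟩
    exact hPmin Q' w' hw'T hQ'walk
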